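/- arXiv:1111.5846 — 2 statements merged into one kernel-verified Lean document; each statement's English description precedes it below -/
import Mathlib

section
/- Subsequence convergence lemma (linear case): given for each N ≥ N₀ a solution û^N of the approximating ODE with û^N(0) ∈ W^N and ‖û^N(0) − u^N(0)‖_N = ρ, there exists a subsequence N_k → ∞ such that Φ^{N_k}∘û^{N_k} converges uniformly on [0,T] (in X) to a solution û of the evolution problem satisfying û(0) ∈ W and ‖û(0) − u(0)‖_X = ρ. -/
open Set Filter Topology

open NormedSpace in
noncomputable def expFlow {n : ℕ} (B : (Fin n → ℝ) →L[ℝ] (Fin n → ℝ)) (v0 : Fin n → ℝ) (t : ℝ) :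
    Fin n → ℝ := (NormedSpace.exp (t • B)) v0

open NormedSpace in
theorem expFlow_zero {n : ℕ} (B : (Fin n → ℝ) →L[ℝ] (Fin n → ℝ)) (v0 : Fin n → ℝ) :
    expFlow B v0 0 = v0 := by
  simp [expFlow, exp_zero]

open NormedSpace in
theorem expFlow_hasDerivAt {n : ℕ} (B : (Fin n → ℝ) →L[ℝ] (Fin n → ℝ)) (v0 : Fin n → ℝ) (t : ℝ) :
    HasDerivAt (expFlow B v0) (B (expFlow B v0 t)) t := by
  have h := hasDerivAt_exp_smul_const' (𝕂 := ℝ) B t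
  have h2 := h.clm_apply (hasDerivAt_const t v0)
  rw [map_zero, add_zero, ContinuousLinearMap.mul_apply] at h2
  exact h2

theorem tuo_comp_subseq {α β : Type*} [UniformSpace β] {f : ℕ → α → β} {g : α → β} {s : Set α}
    (h : TendstoUniformlyOn f g atTop s) {φ : ℕ → ℕ} (hφ : Tendsto φ atTop atTop) :
    TendstoUniformlyOn (fun k => f (φ k)) g atTop s := fun u hu => hφ.eventually (h u hu)

theorem tuo_sum {α X ι : Type*} [NormedAddCommGroup X] {F : ι → ℕ → α → X} {G : ι → α → X}
    {s : Set α} (t : Finset ι) (h : ∀ i ∈ t, TendstoUniformlyOn (F i) (G i) atTop s) :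
    TendstoUniformlyOn (fun k x => ∑ i ∈ t, F i k x) (fun x => ∑ i ∈ t, G i x) atTop s := by
  classical
  induction t using Finset.induction_on with
  | empty =>
    simp only [Finset.sum_empty]
    intro u hu
    filter_upwards with k x _ using refl_mem_uniformity hu
  | insert a t hni ih =>
    simp only [Finset.sum_insert hni]
    exact (h a (Finset.mem_insert_self a t)).add
      (ih fun i hi => h i (Finset.mem_insert_of_mem hi))

theorem tuo_smul {α X : Type*} [NormedAddCommGroup X] [NormedSpace ℝ X]
    {c : ℕ → ℝ} {cl : ℝ} {f : ℕ → α → X} {fl : α → X} {s : Set α}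
    (hc : Filter.Tendsto c atTop (𝓝 cl)) (hf : TendstoUniformlyOn f fl atTop s)
    {M : ℝ} (hb : ∀ x ∈ s, ‖fl x‖ ≤ M) :
    TendstoUniformlyOn (fun k x => c k • f k x) (fun x => cl • fl x) atTop s := by
  rw [Metric.tendstoUniformlyOn_iff] at hf ⊢
  intro ε hε
  set M' : ℝ := max M 0 with hM'
  have hM0 : (0:ℝ) ≤ M' := le_max_right _ _
  have hb' : ∀ x ∈ s, ‖fl x‖ ≤ M' := fun x hx => (hb x hx).trans (le_max_left _ _)
  set C : ℝ := |cl| + 1 with hCdef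
  have hC : (0:ℝ) < C := by positivity
  have h1 : ∀ᶠ k in atTop, dist (c k) cl < min 1 (ε / (2 * (M' + 1))) := by
    have := Metric.tendsto_atTop.mp (hc.congr (fun _ => rfl))
    rcases Metric.tendsto_nhds.mp hc (min 1 (ε / (2 * (M' + 1)))) (by positivity) with h
    exact h
  have h2 := hf (ε / (2 * C)) (by positivity)
  filter_upwards [h1, h2] with k hk1 hk2 x hx
  have hck : |c k| < C := by
    have := abs_sub_abs_le_abs_sub (c k) cl
    rw [Real.dist_eq] at hk1
    have := lt_of_le_of_lt this (lt_of_lt_of_le hk1 (min_le_left _ _))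
    simp only [hCdef]; linarith
  have key : dist (cl • fl x) (c k • f k x) ≤ |cl - c k| * ‖fl x‖ + |c k| * dist (fl x) (f k x) := by
    rw [dist_eq_norm, dist_eq_norm]
    calc ‖cl • fl x - c k • f k x‖ = ‖(cl - c k) • fl x + c k • (fl x - f k x)‖ := by
          congr 1; module
      _ ≤ ‖(cl - c k) • fl x‖ + ‖c k • (fl x - f k x)‖ := norm_add_le _ _
      _ = |cl - c k| * ‖fl x‖ + |c k| * ‖fl x - f k x‖ := by
          rw [norm_smul, norm_smul, Real.norm_eq_abs, Real.norm_eq_abs]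
  have e1 : |cl - c k| * ‖fl x‖ < ε / 2 := by
    rw [Real.dist_eq] at hk1
    have hlt : |cl - c k| < ε / (2 * (M' + 1)) := by
      rw [abs_sub_comm]; exact lt_of_lt_of_le hk1 (min_le_right _ _)
    have hfx := hb' x hx
    have hfn : (0:ℝ) ≤ ‖fl x‖ := norm_nonneg _
    have h3 : |cl - c k| * ‖fl x‖ ≤ |cl - c k| * M' := by
      exact mul_le_mul_of_nonneg_left (hfx) (abs_nonneg _)
    have h4 : |cl - c k| * M' < ε / (2 * (M' + 1)) * (M' + 1) := by
      apply lt_of_le_of_lt (mul_le_mul_of_nonneg_left (by linarith : M' ≤ M' + 1) (abs_nonneg _))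
      exact mul_lt_mul_of_pos_right hlt (by linarith)
    have h5 : ε / (2 * (M' + 1)) * (M' + 1) = ε / 2 := by
      field_simp
    linarith
  have e2 : |c k| * dist (fl x) (f k x) < ε / 2 := by
    have hd := hk2 x hx
    have hd0 : (0:ℝ) ≤ dist (fl x) (f k x) := dist_nonneg
    have hCe : C * (ε / (2 * C)) = ε / 2 := by field_simp
    calc |c k| * dist (fl x) (f k x) ≤ C * dist (fl x) (f k x) :=
          mul_le_mul_of_nonneg_right hck.le hd0
      _ < C * (ε / (2 * C)) := by
          exact mul_lt_mul_of_pos_left hd hC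
      _ = ε / 2 := hCe
  linarith

theorem seminorm_sum_le {E : Type*} [AddCommGroup E] [Module ℝ E] (p : Seminorm ℝ E)
    {ι : Type*} (t : Finset ι) (f : ι → E) : p (∑ i ∈ t, f i) ≤ ∑ i ∈ t, p (f i) := by
  classical
  induction t using Finset.induction_on with
  | empty => simp
  | insert a t hni ih =>
    rw [Finset.sum_insert hni, Finset.sum_insert hni]
    exact le_trans (map_add_le_add p _ _) (by linarith)

theorem coeff_subseq {s : ℕ} {X : Type*} [NormedAddCommGroup X] [NormedSpace ℝ X]
    (e : Fin s → X) (hli : LinearIndependent ℝ e)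
    (p : ℕ → Seminorm ℝ (Fin s → ℝ))
    (hpt : ∀ b : Fin s → ℝ, Tendsto (fun N => p N b) atTop (𝓝 ‖∑ i, b i • e i‖))
    (b : ℕ → Fin s → ℝ) {ρ : ℝ} (hρpos : 0 < ρ)
    (hρ : ∀ᶠ N in atTop, p N (b N) = ρ) :
    ∃ φ : ℕ → ℕ, StrictMono φ ∧ Tendsto φ atTop atTop ∧
      ∃ bl : Fin s → ℝ, Tendsto (fun k => b (φ k)) atTop (𝓝 bl) ∧ ‖∑ i, bl i • e i‖ = ρ := by
  classical
  set q : (Fin s → ℝ) → ℝ := fun c => ‖∑ i, c i • e i‖ with hq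
  have hqcont : Continuous q :=
    (continuous_finset_sum _ fun i _ => (continuous_apply i).smul continuous_const).norm
  have hqpos : ∀ c : Fin s → ℝ, c ≠ 0 → 0 < q c := by
    intro c hc
    rw [hq]
    simp only [norm_pos_iff]
    intro hsum
    exact hc (funext fun i => Fintype.linearIndependent_iff.mp hli c hsum i)
  -- decomposition into singles
  have hdecomp : ∀ c : Fin s → ℝ, c = ∑ i, c i • ((Pi.single i (1:ℝ) : Fin s → ℝ) : Fin s → ℝ) := by
    intro c
    funext j
    simp only [Finset.sum_apply, Pi.smul_apply, smul_eq_mul]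
    simp [Pi.single_apply, Finset.sum_ite_eq', mul_comm]
  -- equi-Lipschitz
  set L : ℝ := ∑ i : Fin s, (q (Pi.single i 1) + 1) with hL
  have hqnn : ∀ c, 0 ≤ q c := fun c => norm_nonneg _
  have hL0 : 0 ≤ L := Finset.sum_nonneg fun i _ => by linarith [hqnn (Pi.single i 1)]
  have heLip : ∀ᶠ N in atTop, ∀ c c' : Fin s → ℝ, |p N c - p N c'| ≤ L * ‖c - c'‖ := by
    have h1 : ∀ᶠ N in atTop, ∀ i : Fin s, p N (Pi.single i 1) ≤ q (Pi.single i 1) + 1 := by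
      rw [eventually_all]
      intro i
      exact (hpt (Pi.single i 1)).eventually (eventually_le_nhds (by linarith))
    filter_upwards [h1] with N hN c c'
    have h2 : p N (c - c') ≤ L * ‖c - c'‖ := by
      have hd : c - c' = ∑ i, (c - c') i • (Pi.single i (1:ℝ) : Fin s → ℝ) := hdecomp (c - c')
      calc p N (c - c') = p N (∑ i, (c - c') i • (Pi.single i (1:ℝ) : Fin s → ℝ)) := by rw [← hd]
        _ ≤ ∑ i, p N ((c - c') i • (Pi.single i (1:ℝ) : Fin s → ℝ)) := seminorm_sum_le _ _ _
        _ ≤ ∑ i : Fin s, ‖c - c'‖ * (q (Pi.single i 1) + 1) := by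
            apply Finset.sum_le_sum
            intro i _
            rw [map_smul_eq_mul]
            have h3 : ‖(c - c') i‖ ≤ ‖c - c'‖ := norm_le_pi_norm (c - c') i
            have h4 : 0 ≤ p N ((Pi.single i (1:ℝ) : Fin s → ℝ)) := apply_nonneg _ _
            calc ‖(c - c') i‖ * p N (Pi.single i 1)
                ≤ ‖c - c'‖ * p N (Pi.single i 1) := mul_le_mul_of_nonneg_right h3 h4
              _ ≤ ‖c - c'‖ * (q (Pi.single i 1) + 1) :=
                  mul_le_mul_of_nonneg_left (hN i) (norm_nonneg _)
        _ = L * ‖c - c'‖ := by rw [hL, Finset.sum_mul]; exact Finset.sum_congr rfl fun i _ => mul_comm _ _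
    calc |p N c - p N c'| = ‖p N c - p N c'‖ := (Real.norm_eq_abs _).symm
      _ ≤ p N (c - c') := (p N).norm_sub_map_le_sub c c'
      _ ≤ L * ‖c - c'‖ := h2
  -- s = 0 impossible
  rcases Nat.eq_zero_or_pos s with hs | hs
  · exfalso
    obtain ⟨N, hN⟩ := hρ.exists
    have hb0 : b N = 0 := by
      subst hs
      exact funext fun i => i.elim0
    rw [hb0, map_zero] at hN
    linarith
  -- sphere, minimum ε
  have hScompact : IsCompact (Metric.sphere (0 : Fin s → ℝ) 1) := isCompact_sphere 0 1
  have hSne : (Metric.sphere (0 : Fin s → ℝ) 1).Nonempty := by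
    refine ⟨Pi.single ⟨0, hs⟩ (1:ℝ), ?_⟩
    simp [Pi.norm_single]
  obtain ⟨xm, hxmS, hxm⟩ := hScompact.exists_isMinOn hSne hqcont.continuousOn
  set ε : ℝ := q xm with hε
  have hεpos : 0 < ε := by
    apply hqpos
    intro h
    rw [h] at hxmS
    simp at hxmS
  have hεle : ∀ x ∈ Metric.sphere (0 : Fin s → ℝ) 1, ε ≤ q x := fun x hx => hxm hx
  -- finite net
  set r : ℝ := ε / (4 * (L + 1)) with hr
  have hrpos : 0 < r := div_pos hεpos (by linarith)
  obtain ⟨t, hts, htfin, hcover⟩ := hScompact.elim_finite_subcover_image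
    (b := Metric.sphere (0 : Fin s → ℝ) 1) (c := fun y => Metric.ball y r)
    (fun y _ => Metric.isOpen_ball)
    (fun x hx => Set.mem_biUnion hx (Metric.mem_ball_self hrpos))
  -- eventual lower bound on the sphere
  have hlow : ∀ᶠ N in atTop, ∀ x ∈ Metric.sphere (0 : Fin s → ℝ) 1, ε / 2 ≤ p N x := by
    have hnet : ∀ᶠ N in atTop, ∀ y ∈ t, |p N y - q y| < ε / 4 := by
      rw [htfin.eventually_all]
      intro y _
      have := (hpt y).eventually (Metric.ball_mem_nhds (q y) (by positivity : (0:ℝ) < ε/4))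
      filter_upwards [this] with N hN
      rw [Real.dist_eq] at hN
      exact hN
    filter_upwards [hnet, heLip] with N hN hLip x hx
    obtain ⟨y, hyt, hxy⟩ := Set.mem_iUnion₂.mp (hcover hx)
    rw [Metric.mem_ball, dist_eq_norm] at hxy
    have hyS := hts hyt
    have h1 : |p N x - p N y| ≤ L * ‖x - y‖ := hLip x y
    have h2 : |p N y - q y| < ε / 4 := hN y hyt
    have h3 : ε ≤ q y := hεle y hyS
    have h4 : L * ‖x - y‖ ≤ (L + 1) * r :=
      mul_le_mul (by linarith) hxy.le (norm_nonneg _) (by linarith)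
    have h5 : (L + 1) * r = ε / 4 := by
      rw [hr]; field_simp
    have := abs_le.mp (le_of_lt h2)
    have := abs_le.mp (h1.trans (h4.trans_eq h5))
    linarith
  -- eventual bound on b N
  set R : ℝ := 2 * ρ / ε with hR
  have hbd : ∀ᶠ N in atTop, ‖b N‖ ≤ R := by
    filter_upwards [hρ, hlow] with N hN hlowN
    have hbne : b N ≠ 0 := by
      intro h
      rw [h, map_zero] at hN
      linarith
    have hnb : 0 < ‖b N‖ := norm_pos_iff.mpr hbne
    set x : Fin s → ℝ := ‖b N‖⁻¹ • b N with hx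
    have hxS : x ∈ Metric.sphere (0 : Fin s → ℝ) 1 := by
      simp only [hx, mem_sphere_iff_norm, sub_zero, norm_smul, norm_inv, norm_norm]
      field_simp
    have hpx : p N x = ‖b N‖⁻¹ * ρ := by
      rw [hx, map_smul_eq_mul, ← hN]
      congr 1
      rw [norm_inv, norm_norm]
    have h6 : ε / 2 ≤ p N x := hlowN x hxS
    rw [hpx] at h6
    have h8 : ‖b N‖ * (ε / 2) ≤ ρ := by
      have h9 := mul_le_mul_of_nonneg_left h6 hnb.le
      rw [← mul_assoc, mul_inv_cancel₀ (ne_of_gt hnb), one_mul] at h9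
      exact h9
    show ‖b N‖ ≤ 2 * ρ / ε
    rw [le_div_iff₀ hεpos]
    linarith
  -- extract threshold
  obtain ⟨N₁, hN₁⟩ := (hρ.and (hbd.and heLip)).exists_forall_of_atTop
  -- Bolzano–Weierstrass
  have hmem : ∀ k : ℕ, b (k + N₁) ∈ Metric.closedBall (0 : Fin s → ℝ) R := by
    intro k
    rw [Metric.mem_closedBall, dist_zero_right]
    exact (hN₁ (k + N₁) (Nat.le_add_left _ _)).2.1
  obtain ⟨bl, _, ψ, hψ, hψtendsto⟩ :=
    tendsto_subseq_of_bounded Metric.isBounded_closedBall hmem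
  refine ⟨fun k => ψ k + N₁, fun a b hab => by simpa using hψ hab, ?_, bl, hψtendsto, ?_⟩
  · exact tendsto_atTop_mono (fun k => Nat.le_add_right _ _) (hψ.tendsto_atTop)
  · -- identify the limit
    set φ : ℕ → ℕ := fun k => ψ k + N₁ with hφ
    have hφge : ∀ k, N₁ ≤ φ k := fun k => Nat.le_add_left _ _
    have hφtendsto : Tendsto φ atTop atTop :=
      tendsto_atTop_mono (fun k => Nat.le_add_right _ _)
        ((hψ.tendsto_atTop).comp (by exact tendsto_id) |>.congr fun _ => rfl)
    have h1 : Tendsto (fun k => p (φ k) bl) atTop (𝓝 (q bl)) := (hpt bl).comp hφtendsto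
    have h2 : Tendsto (fun k => p (φ k) (b (φ k)) - p (φ k) bl) atTop (𝓝 0) := by
      refine squeeze_zero_norm (a := fun k => L * ‖b (φ k) - bl‖) (fun k => ?_) ?_
      · rw [Real.norm_eq_abs]
        exact (hN₁ (φ k) (hφge k)).2.2 (b (φ k)) bl
      · have : Tendsto (fun k => b (φ k) - bl) atTop (𝓝 (bl - bl)) :=
          hψtendsto.sub tendsto_const_nhds
        rw [sub_self] at this
        have := this.norm
        rw [norm_zero] at this
        simpa using this.const_mul L
    have h3 : Tendsto (fun k => p (φ k) (b (φ k))) atTop (𝓝 (q bl)) := by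
      have := h2.add h1
      rw [zero_add] at this
      exact this.congr fun k => by ring
    have h4 : ∀ k, p (φ k) (b (φ k)) = ρ := fun k => (hN₁ (φ k) (hφge k)).1
    have h5 : Tendsto (fun _ : ℕ => ρ) atTop (𝓝 (q bl)) := h3.congr h4
    have h6 := tendsto_nhds_unique h5 tendsto_const_nhds
    simp only [hq] at h6
    exact h6

/-- `u` is a solution of the linear evolution problem `u' + 𝓛 u = g` on `[0,T]`:
`u` is continuous on `[0,T]`, takes values in `D_B`, and is differentiable with
`u'(t) + 𝓛(u(t)) = g(t)` on `(0,T]`. -/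
def IsSolPDE {X : Type*} [NormedAddCommGroup X] [NormedSpace ℝ X]
    (T : ℝ) (DB : Submodule ℝ X) (L : DB →ₗ[ℝ] X) (g : ℝ → X) (u : ℝ → X) : Prop :=
  ContinuousOn u (Set.Icc 0 T) ∧ (∀ t ∈ Set.Icc 0 T, u t ∈ DB) ∧
    ∀ t ∈ Set.Ioc 0 T, ∃ hm : u t ∈ DB, HasDerivAt u (g t - L ⟨u t, hm⟩) t

/-- `v` is a solution of the approximating ODE `v' + A v = gN` on `[0,T]`. -/
def IsSolODE {n : ℕ} (T : ℝ) (A : Matrix (Fin n) (Fin n) ℝ) (gN : ℝ → Fin n → ℝ)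
    (v : ℝ → Fin n → ℝ) : Prop :=
  ContinuousOn v (Set.Icc 0 T) ∧ ∀ t ∈ Set.Ioc 0 T, HasDerivAt v (gN t - A.mulVec (v t)) t

/-- Subsequence convergence lemma (linear case): from any family `uhat^N` of solutions of
the approximating ODEs with `uhat^N(0) ∈ W^N` and `‖uhat^N(0) − u^N(0)‖_N = ρ`, one can
extract a subsequence `N_k` such that `Φ^{N_k} ∘ uhat^{N_k}` converges uniformly on `[0,T]`
to a solution `uhat` of the evolution problem with `uhat(0) ∈ W` and `‖uhat(0) − u(0)‖_X = ρ`. -/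
theorem subsequence_convergence_linear
    {X : Type*} [NormedAddCommGroup X] [NormedSpace ℝ X] [CompleteSpace X]
    {T : ℝ} (hT : 0 < T)
    (DB : Submodule ℝ X) (L : DB →ₗ[ℝ] X) (g : ℝ → X) (hg : ContinuousOn g (Set.Icc 0 T))
    -- well-posedness of the evolution problem
    (hexist : ∀ u₀ ∈ DB, ∃ u : ℝ → X, IsSolPDE T DB L g u ∧ u 0 = u₀)
    (huniq : ∀ u v : ℝ → X, IsSolPDE T DB L g u → IsSolPDE T DB L g v → u 0 = v 0 →
      ∀ t ∈ Set.Icc 0 T, u t = v t)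
    (hcontdep : ∀ (v : ℕ → ℝ → X) (w : ℝ → X), (∀ k, IsSolPDE T DB L g (v k)) →
      IsSolPDE T DB L g w → Tendsto (fun k => v k 0) atTop (nhds (w 0)) →
      TendstoUniformlyOn (fun k t => v k t) w atTop (Set.Icc 0 T))
    -- the space for estimation `W = span{e₁,…,e_s} ⊆ D_B`
    {s : ℕ} (e : Fin s → X) (he : ∀ i, e i ∈ DB) (hli : LinearIndependent ℝ e)
    -- approximation scheme data
    (N₀ : ℕ) (A : ∀ N : ℕ, Matrix (Fin N) (Fin N) ℝ) (gN : ∀ N : ℕ, ℝ → Fin N → ℝ)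
    (hgN : ∀ N, N₀ ≤ N → ContinuousOn (gN N) (Set.Icc 0 T))
    (P : ∀ N : ℕ, DB →ₗ[ℝ] (Fin N → ℝ)) (Φ : ∀ N : ℕ, (Fin N → ℝ) →ₗ[ℝ] X)
    (nN : ∀ N : ℕ, Seminorm ℝ (Fin N → ℝ))
    (hnN : ∀ N (v : Fin N → ℝ), nN N v = 0 → v = 0)
    -- well-posedness of the approximation scheme
    (hscheme1 : ∀ u : ℝ → X, IsSolPDE T DB L g u →
      ∀ v : (N : ℕ) → ℝ → Fin N → ℝ, (∀ N, N₀ ≤ N → IsSolODE T (A N) (gN N) (v N)) →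
      (∀ N, N₀ ≤ N → ∃ hm : u 0 ∈ DB, v N 0 = P N ⟨u 0, hm⟩) →
      TendstoUniformlyOn (fun N t => Φ N (v N t)) u atTop (Set.Icc 0 T))
    (hscheme2 : ∀ v : DB, Tendsto (fun N => nN N (P N v)) atTop (nhds ‖(v : X)‖))
    -- the nominal trajectory `u` with `u(0) ∈ W` and its approximations `u^N`
    (ρ : ℝ) (hρ : 0 < ρ)
    (u : ℝ → X) (hu : IsSolPDE T DB L g u)
    (hu0 : u 0 ∈ Submodule.span ℝ (Set.range e))
    (uN : ∀ N : ℕ, ℝ → Fin N → ℝ) (huN : ∀ N, N₀ ≤ N → IsSolODE T (A N) (gN N) (uN N))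
    (huN0 : ∀ N, N₀ ≤ N → ∃ hm : u 0 ∈ DB, uN N 0 = P N ⟨u 0, hm⟩)
    -- the given family of ODE solutions
    (uhatN : ∀ N : ℕ, ℝ → Fin N → ℝ)
    (huhatN : ∀ N, N₀ ≤ N → IsSolODE T (A N) (gN N) (uhatN N))
    (huhatN0 : ∀ N, N₀ ≤ N →
      uhatN N 0 ∈ Submodule.span ℝ (Set.range fun i : Fin s => P N ⟨e i, he i⟩))
    (huhatNρ : ∀ N, N₀ ≤ N → nN N (uhatN N 0 - uN N 0) = ρ) :
    ∃ φ : ℕ → ℕ, StrictMono φ ∧ (∀ k, N₀ ≤ φ k) ∧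
      ∃ uhat : ℝ → X, IsSolPDE T DB L g uhat ∧
        uhat 0 ∈ Submodule.span ℝ (Set.range e) ∧ ‖uhat 0 - u 0‖ = ρ ∧
        TendstoUniformlyOn (fun k t => Φ (φ k) (uhatN (φ k) t)) uhat atTop (Set.Icc 0 T) := by
  classical
  have h0T : (0:ℝ) ∈ Set.Icc 0 T := ⟨le_refl 0, hT.le⟩
  have hu0DB : u 0 ∈ DB := hu.2.1 0 h0T
  -- coefficients of u 0
  obtain ⟨a, ha⟩ := (Submodule.mem_span_range_iff_exists_fun ℝ).mp hu0
  have haDB : (⟨u 0, hu0DB⟩ : DB) = ∑ i, a i • (⟨e i, he i⟩ : DB) := by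
    apply Subtype.ext
    simp only [Submodule.coe_sum, Submodule.coe_smul]
    exact ha.symm
  -- coefficients of uhatN N 0
  have hcN : ∀ N, N₀ ≤ N → ∃ c : Fin s → ℝ, ∑ i, c i • P N ⟨e i, he i⟩ = uhatN N 0 :=
    fun N hN => (Submodule.mem_span_range_iff_exists_fun ℝ).mp (huhatN0 N hN)
  set bN : ℕ → Fin s → ℝ :=
    fun N => if h : N₀ ≤ N then (fun i => (hcN N h).choose i - a i) else 0 with hbNdef
  have hPu0 : ∀ N, N₀ ≤ N → uN N 0 = P N ⟨u 0, hu0DB⟩ := by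
    intro N hN
    obtain ⟨hm, h⟩ := huN0 N hN
    exact h
  have hPa : ∀ N : ℕ, (P N) ⟨u 0, hu0DB⟩ = ∑ i, a i • P N ⟨e i, he i⟩ := by
    intro N
    rw [haDB, map_sum]
    simp only [map_smul]
  have hkey : ∀ N, N₀ ≤ N →
      uhatN N 0 = P N ⟨u 0, hu0DB⟩ + ∑ i, bN N i • P N ⟨e i, he i⟩ := by
    intro N h
    have hc := (hcN N h).choose_spec
    rw [← hc]
    simp only [hbNdef, dif_pos h, sub_smul, Finset.sum_sub_distrib]
    rw [hPa N]
    abel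
  -- the pulled-back seminorms
  set pn : ℕ → Seminorm ℝ (Fin s → ℝ) :=
    fun N => (nN N).comp (Fintype.linearCombination ℝ (fun i => P N ⟨e i, he i⟩)) with hpndef
  have hpnapp : ∀ N (b : Fin s → ℝ), pn N b = nN N (∑ i, b i • P N ⟨e i, he i⟩) := by
    intro N b
    simp [hpndef, Seminorm.comp_apply, Fintype.linearCombination_apply]
  have hpt : ∀ b : Fin s → ℝ, Tendsto (fun N => pn N b) atTop (𝓝 ‖∑ i, b i • e i‖) := by
    intro b
    have h2 := hscheme2 (∑ i, b i • (⟨e i, he i⟩ : DB))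
    simp only [Submodule.coe_sum, Submodule.coe_smul] at h2
    apply h2.congr
    intro N
    rw [hpnapp N b, map_sum]
    simp only [map_smul]
  have hρev : ∀ᶠ N in atTop, pn N (bN N) = ρ := by
    rw [eventually_atTop]
    refine ⟨N₀, fun N hN => ?_⟩
    rw [hpnapp]
    have h3 : uhatN N 0 - uN N 0 = ∑ i, bN N i • P N ⟨e i, he i⟩ := by
      rw [hkey N hN, hPu0 N hN]
      abel
    rw [← h3]
    exact huhatNρ N hN
  obtain ⟨φ0, hφ0mono, hφ0top, bl, hbl, hblnorm⟩ := coeff_subseq e hli pn hpt bN hρ hρev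
  -- shift the subsequence above N₀
  obtain ⟨j, hj⟩ := eventually_atTop.mp (hφ0top.eventually (eventually_ge_atTop N₀))
  set ψ : ℕ → ℕ := fun k => φ0 (k + j) with hψdef
  have hψmono : StrictMono ψ := fun x y hxy => hφ0mono (by omega)
  have hψN₀ : ∀ k, N₀ ≤ ψ k := fun k => hj (k + j) (Nat.le_add_left _ _)
  have hψtop : Tendsto ψ atTop atTop := hφ0top.comp (tendsto_add_atTop_nat j)
  have hblψ : Tendsto (fun k => bN (ψ k)) atTop (𝓝 bl) := hbl.comp (tendsto_add_atTop_nat j)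
    -- auxiliary PDE solutions with initial data u 0 + e i
  have hy : ∀ i : Fin s, ∃ yi : ℝ → X, IsSolPDE T DB L g yi ∧ yi 0 = u 0 + e i :=
    fun i => hexist (u 0 + e i) (DB.add_mem hu0DB (he i))
  choose y hysol hy0 using hy
  -- homogeneous ODE flows
  set B : ∀ N : ℕ, (Fin N → ℝ) →L[ℝ] (Fin N → ℝ) :=
    fun N => -(LinearMap.toContinuousLinearMap ((A N).mulVecLin)) with hBdef
  have hBapp : ∀ N (w : Fin N → ℝ), B N w = -((A N).mulVec w) := by
    intro N w
    simp [hBdef, Matrix.mulVecLin_apply]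
  set η : ∀ N : ℕ, Fin s → ℝ → Fin N → ℝ :=
    fun N i => expFlow (B N) (P N ⟨e i, he i⟩) with hηdef
  have hη0 : ∀ N i, η N i 0 = P N ⟨e i, he i⟩ := fun N i => expFlow_zero _ _
  have hηderiv : ∀ N i t, HasDerivAt (η N i) (-((A N).mulVec (η N i t))) t := by
    intro N i t
    have h := expFlow_hasDerivAt (B N) ((P N) ⟨e i, he i⟩) t
    rw [hBapp] at h
    exact h
  have hηcont : ∀ N i, Continuous (η N i) :=
    fun N i => continuous_iff_continuousAt.mpr fun t => (hηderiv N i t).continuousAt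
  -- corrected families
  set vN : ∀ N : ℕ, ℝ → Fin N → ℝ :=
    fun N t => uhatN N t - ∑ i, bN N i • η N i t with hvNdef
  set yN : ∀ N : ℕ, Fin s → ℝ → Fin N → ℝ :=
    fun N i t => uN N t + η N i t with hyNdef
  have hvNsol : ∀ N, N₀ ≤ N → IsSolODE T (A N) (gN N) (vN N) := by
    intro N hN
    obtain ⟨hcontN, hderN⟩ := huhatN N hN
    constructor
    · apply hcontN.sub
      exact (continuous_finset_sum _ fun i _ => (hηcont N i).const_smul (bN N i)).continuousOn
    · intro t ht
      have h1 := hderN t ht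
      have h2 : HasDerivAt (fun t => ∑ i, bN N i • η N i t)
          (∑ i, bN N i • -((A N).mulVec (η N i t))) t :=
        HasDerivAt.fun_sum fun i _ => (hηderiv N i t).const_smul (bN N i)
      have h3 : HasDerivAt (vN N) _ t := h1.sub h2
      convert h3 using 1
      have hsum : (A N).mulVec (∑ i, bN N i • η N i t)
          = ∑ i, bN N i • (A N).mulVec (η N i t) := by
        rw [← Matrix.mulVecLin_apply, map_sum]
        simp only [map_smul, Matrix.mulVecLin_apply]
      show gN N t - (A N).mulVec (uhatN N t - ∑ i, bN N i • η N i t) = _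
      rw [Matrix.mulVec_sub, hsum]
      simp only [smul_neg]
      rw [Finset.sum_neg_distrib]
      abel
  have hyNsol : ∀ (i : Fin s) N, N₀ ≤ N → IsSolODE T (A N) (gN N) (fun t => yN N i t) := by
    intro i N hN
    obtain ⟨hcontN, hderN⟩ := huN N hN
    constructor
    · exact hcontN.add (hηcont N i).continuousOn
    · intro t ht
      have h1 := hderN t ht
      have h3 : HasDerivAt (fun t => yN N i t) _ t := h1.add (hηderiv N i t)
      convert h3 using 1
      show gN N t - (A N).mulVec (uN N t + η N i t) = _
      rw [Matrix.mulVec_add]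
      abel
  have hvN0 : ∀ N, N₀ ≤ N → ∃ hm : u 0 ∈ DB, vN N 0 = P N ⟨u 0, hm⟩ := by
    intro N hN
    refine ⟨hu0DB, ?_⟩
    show uhatN N 0 - ∑ i, bN N i • η N i 0 = _
    rw [hkey N hN]
    simp only [hη0]
    abel
  have hyN0 : ∀ i : Fin s, ∀ N, N₀ ≤ N → ∃ hm : y i 0 ∈ DB,
      (fun t => yN N i t) 0 = P N ⟨y i 0, hm⟩ := by
    intro i N hN
    have hmem : y i 0 ∈ DB := (hysol i).2.1 0 h0T
    refine ⟨hmem, ?_⟩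
    have hsub : (⟨y i 0, hmem⟩ : DB) = ⟨u 0, hu0DB⟩ + ⟨e i, he i⟩ :=
      Subtype.ext (by simp [hy0 i])
    show uN N 0 + η N i 0 = _
    rw [hPu0 N hN, hη0, hsub, map_add]
  -- the three uniform convergences from the scheme
  have hconv_v : TendstoUniformlyOn (fun N t => Φ N (vN N t)) u atTop (Set.Icc 0 T) :=
    hscheme1 u hu vN hvNsol hvN0
  have hconv_y : ∀ i : Fin s,
      TendstoUniformlyOn (fun N t => Φ N (yN N i t)) (y i) atTop (Set.Icc 0 T) :=
    fun i => hscheme1 (y i) (hysol i) (fun N t => yN N i t) (hyNsol i) (hyN0 i)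
  have hconv_u : TendstoUniformlyOn (fun N t => Φ N (uN N t)) u atTop (Set.Icc 0 T) :=
    hscheme1 u hu uN huN huN0
  -- uniform bound on y i - u
  have hbound : ∀ i : Fin s, ∃ M, ∀ t ∈ Set.Icc 0 T, ‖y i t - u t‖ ≤ M := by
    intro i
    obtain ⟨M, hM⟩ := isCompact_Icc.exists_bound_of_continuousOn ((hysol i).1.sub hu.1)
    exact ⟨M, hM⟩
  choose Mb hMb using hbound
  -- the limit solution
  set uhat : ℝ → X := fun t => u t + ∑ i, bl i • (y i t - u t) with huhatdef
  have huhat_sol : IsSolPDE T DB L g uhat := by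
    refine ⟨?_, ?_, ?_⟩
    · exact hu.1.add (continuousOn_finset_sum _ fun i _ =>
        ((hysol i).1.sub hu.1).const_smul (bl i))
    · intro t ht
      exact DB.add_mem (hu.2.1 t ht)
        (Submodule.sum_mem _ fun i _ => Submodule.smul_mem _ _
          (DB.sub_mem ((hysol i).2.1 t ht) (hu.2.1 t ht)))
    · intro t ht
      have htIcc := Set.Ioc_subset_Icc_self ht
      obtain ⟨hmu, hdu⟩ := hu.2.2 t ht
      have hmy : ∀ i, y i t ∈ DB := fun i => (hysol i).2.1 t htIcc
      have hdy : ∀ i, HasDerivAt (y i) (g t - L ⟨y i t, hmy i⟩) t := by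
        intro i
        obtain ⟨hm, hd⟩ := (hysol i).2.2 t ht
        exact hd
      have hmem : uhat t ∈ DB := DB.add_mem (hu.2.1 t htIcc)
        (Submodule.sum_mem _ fun i _ => Submodule.smul_mem _ _
          (DB.sub_mem (hmy i) (hu.2.1 t htIcc)))
      refine ⟨hmem, ?_⟩
      have hD : HasDerivAt uhat
          ((g t - L ⟨u t, hmu⟩) +
            ∑ i, bl i • ((g t - L ⟨y i t, hmy i⟩) - (g t - L ⟨u t, hmu⟩))) t :=
        hdu.add (HasDerivAt.fun_sum fun i _ => ((hdy i).sub hdu).const_smul (bl i))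
      convert hD using 1
      have hsub : (⟨uhat t, hmem⟩ : DB)
          = ⟨u t, hmu⟩ + ∑ i, bl i • ((⟨y i t, hmy i⟩ : DB) - ⟨u t, hmu⟩) := by
        apply Subtype.ext
        simp [huhatdef, Submodule.coe_sum]
      rw [hsub, map_add, map_sum]
      simp only [map_smul, map_sub]
      have hterm : ∀ i : Fin s,
          bl i • ((g t - L ⟨y i t, hmy i⟩) - (g t - L ⟨u t, hmu⟩))
            = -(bl i • (L ⟨y i t, hmy i⟩ - L ⟨u t, hmu⟩)) := by
        intro i
        rw [← smul_neg]
        congr 1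
        abel
      rw [Finset.sum_congr rfl fun i _ => hterm i, Finset.sum_neg_distrib]
      abel
  have huhat0 : uhat 0 = u 0 + ∑ i, bl i • e i := by
    show u 0 + ∑ i, bl i • (y i 0 - u 0) = _
    congr 1
    refine Finset.sum_congr rfl fun i _ => ?_
    rw [hy0 i]
    congr 1
    abel
  have hspan : uhat 0 ∈ Submodule.span ℝ (Set.range e) := by
    rw [huhat0]
    exact Submodule.add_mem _ hu0 (Submodule.sum_mem _ fun i _ =>
      Submodule.smul_mem _ _ (Submodule.subset_span ⟨i, rfl⟩))
  have hnorm : ‖uhat 0 - u 0‖ = ρ := by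
    rw [huhat0, add_sub_cancel_left]
    exact hblnorm
  refine ⟨ψ, hψmono, hψN₀, uhat, huhat_sol, hspan, hnorm, ?_⟩
  have hRHS : TendstoUniformlyOn
      (fun k t => Φ (ψ k) (vN (ψ k) t)
        + ∑ i, bN (ψ k) i • (Φ (ψ k) (yN (ψ k) i t) - Φ (ψ k) (uN (ψ k) t)))
      uhat atTop (Set.Icc 0 T) := by
    have h1 : TendstoUniformlyOn (fun k t => Φ (ψ k) (vN (ψ k) t)) u atTop (Set.Icc 0 T) :=
      tuo_comp_subseq hconv_v hψtop
    have h2 : ∀ i : Fin s, TendstoUniformlyOn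
        (fun k t => bN (ψ k) i • (Φ (ψ k) (yN (ψ k) i t) - Φ (ψ k) (uN (ψ k) t)))
        (fun t => bl i • (y i t - u t)) atTop (Set.Icc 0 T) := by
      intro i
      refine tuo_smul ?_ (tuo_comp_subseq ((hconv_y i).sub hconv_u) hψtop) (hMb i)
      exact (tendsto_pi_nhds.mp hblψ) i
    have := h1.add (tuo_sum Finset.univ fun i _ => h2 i)
    exact this
  apply hRHS.congr
  filter_upwards with k
  intro t ht
  show Φ (ψ k) (vN (ψ k) t) + _ = Φ (ψ k) (uhatN (ψ k) t)
  have hv : vN (ψ k) t = uhatN (ψ k) t - ∑ i, bN (ψ k) i • η (ψ k) i t := rfl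
  have hyv : ∀ i : Fin s, yN (ψ k) i t = uN (ψ k) t + η (ψ k) i t := fun i => rfl
  rw [hv]
  simp only [hyv, map_sub, map_sum, map_smul, map_add]
  have hterm2 : ∀ i : Fin s,
      bN (ψ k) i • ((Φ (ψ k) (uN (ψ k) t) + Φ (ψ k) (η (ψ k) i t)) - Φ (ψ k) (uN (ψ k) t))
        = bN (ψ k) i • Φ (ψ k) (η (ψ k) i t) := by
    intro i
    congr 1
    abel
  rw [Finset.sum_congr rfl fun i _ => hterm2 i]
  abel
end

section
/- Gramian characterization of the unobservability index (orthonormal basis): let V be a finite-dimensional real inner product space, A : V → V linear, g : [0,T] → V continuous, Θ : V → ℝ^p linear, and let e₁,…,e_s be orthonormal vectors in V spanning W. Let u be the solution of u' = −Au + g with u(0) ∈ W, and for ρ > 0 define ε = inf{ (∫₀ᵀ ‖Θ(û(t)) − Θ(u(t))‖² dt)^{1/2} : û solves û' = −Aû + g, û(0) ∈ W, ‖û(0) − u(0)‖ = ρ }. Let G ∈ ℝ^{s×s} be the Gramian with entries G_{ij} = ∫₀ᵀ ⟨Θ(e^{−At}e_i), Θ(e^{−At}e_j)⟩ dt and let σ_min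 be its smallest eigenvalue. Then ε² = σ_min ρ²; in particular, if σ_min > 0, the unobservability index is ρ/ε = 1/√σ_min. -/
open Set Filter Topology

section Aux

lemma unobs_flow_rep {V : Type*} [NormedAddCommGroup V] [NormedSpace ℝ V] [CompleteSpace V]
    {T : ℝ} (hT : 0 < T) (A : V →L[ℝ] V) (g : ℝ → V)
    (u uhat : ℝ → V) (hu : ContinuousOn u (Set.Icc 0 T))
    (hu' : ∀ t ∈ Set.Ioc 0 T, HasDerivAt u (g t - A (u t)) t)
    (hv : ContinuousOn uhat (Set.Icc 0 T))
    (hv' : ∀ t ∈ Set.Ioc 0 T, HasDerivAt uhat (g t - A (uhat t)) t) :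
    ∀ t ∈ Set.Icc 0 T, uhat t - u t = NormedSpace.exp (-(t • A)) (uhat 0 - u 0) := by
  set w : ℝ → V := fun t => uhat t - u t with hw_def
  have hw : ContinuousOn w (Set.Icc 0 T) := hv.sub hu
  have hw' : ∀ t ∈ Set.Ioc 0 T, HasDerivAt w (-(A (w t))) t := by
    intro t ht
    have := (hv' t ht).sub (hu' t ht)
    have heq : g t - A (uhat t) - (g t - A (u t)) = -(A (w t)) := by
      simp only [hw_def, map_sub]; abel
    exact heq ▸ this
  set φ : ℝ → V := fun t => NormedSpace.exp (t • A) (w t) with hφ_def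
  have hφ' : ∀ t ∈ Set.Ioc 0 T, HasDerivAt φ 0 t := by
    intro t ht
    have h1 := (hasDerivAt_exp_smul_const (𝕂 := ℝ) A t).clm_apply (hw' t ht)
    simpa [ContinuousLinearMap.mul_apply] using h1
  have hφc : ContinuousOn φ (Set.Icc 0 T) := by
    let +nondep : NormedAlgebra ℚ (V →L[ℝ] V) := .restrictScalars ℚ ℝ _
    apply ContinuousOn.clm_apply _ hw
    exact (NormedSpace.exp_continuous.comp (continuous_id.smul continuous_const)).continuousOn
  have key : ∀ t ∈ Set.Icc 0 T, φ t = φ 0 := by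
    intro t ht
    rcases eq_or_lt_of_le ht.1 with h0 | h0
    · rw [← h0]
    · have hconst : ∀ a ∈ Set.Ioc 0 t, φ t = φ a := by
        intro a ha
        exact constant_of_has_deriv_right_zero
          (hφc.mono (Set.Icc_subset_Icc ha.1.le ht.2))
          (fun x hx => ((hφ' x ⟨lt_of_lt_of_le ha.1 hx.1, hx.2.le.trans ht.2⟩).hasDerivWithinAt))
          t ⟨ha.2, le_refl t⟩
      have h2 : Tendsto φ (𝓝[Set.Ioc 0 t] 0) (𝓝 (φ 0)) :=
        (hφc 0 ⟨le_refl 0, hT.le⟩).mono (Set.Ioc_subset_Icc_self.trans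
          (Set.Icc_subset_Icc le_rfl ht.2))
      have h3 : Tendsto φ (𝓝[Set.Ioc 0 t] 0) (𝓝 (φ t)) :=
        tendsto_const_nhds.congr' (eventually_mem_nhdsWithin.mono fun a ha => (hconst a ha))
      haveI := left_nhdsWithin_Ioc_neBot h0
      exact tendsto_nhds_unique h3 h2
  intro t ht
  have hinv : NormedSpace.exp (-(t • A)) * NormedSpace.exp (t • A) = 1 := by
    let +nondep : NormedAlgebra ℚ (V →L[ℝ] V) := .restrictScalars ℚ ℝ _
    rw [← NormedSpace.exp_add_of_commute ((Commute.refl (t • A)).neg_left), neg_add_cancel,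
      NormedSpace.exp_zero]
  have h0 : φ 0 = w 0 := by simp [hφ_def, NormedSpace.exp_zero]
  calc w t = (NormedSpace.exp (-(t • A)) * NormedSpace.exp (t • A)) (w t) := by
        rw [hinv]; simp
    _ = NormedSpace.exp (-(t • A)) (φ t) := by simp [ContinuousLinearMap.mul_apply, hφ_def]
    _ = NormedSpace.exp (-(t • A)) (w 0) := by rw [key t ht, h0]

lemma unobs_quad_lower {s : ℕ} (G : Matrix (Fin s) (Fin s) ℝ) (hGh : G.IsHermitian) {σmin : ℝ}
    (hlb : ∀ σ ∈ {σ : ℝ | ∃ ξ : Fin s → ℝ, ξ ≠ 0 ∧ G.mulVec ξ = σ • ξ}, σmin ≤ σ)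
    (ξ : Fin s → ℝ) :
    σmin * dotProduct ξ ξ ≤ dotProduct ξ (G.mulVec ξ) := by
  set H := G - σmin • (1 : Matrix (Fin s) (Fin s) ℝ) with hH_def
  have hsm : (σmin • (1 : Matrix (Fin s) (Fin s) ℝ)).IsHermitian := by
    simp [Matrix.IsHermitian, Matrix.conjTranspose_smul]
  have hH : H.IsHermitian := hGh.sub hsm
  have heig : ∀ k, 0 ≤ hH.eigenvalues k := by
    intro k
    obtain ⟨v, hvne, hv⟩ : ∃ v : Fin s → ℝ, v ≠ 0 ∧ H.mulVec v = hH.eigenvalues k • v := by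
      refine ⟨⇑(hH.eigenvectorBasis k), ?_, hH.mulVec_eigenvectorBasis k⟩
      intro h
      exact hH.eigenvectorBasis.orthonormal.ne_zero k (by ext i; exact congrFun h i)
    have hGv : G.mulVec v = (hH.eigenvalues k + σmin) • v := by
      have h2 : H.mulVec v = G.mulVec v - σmin • v := by
        simp [hH_def, Matrix.sub_mulVec, Matrix.smul_mulVec, Matrix.one_mulVec]
      rw [h2, sub_eq_iff_eq_add] at hv
      rw [hv, add_smul]
    have := hlb (hH.eigenvalues k + σmin) ⟨v, hvne, hGv⟩
    linarith
  have hpsd := hH.posSemidef_iff_eigenvalues_nonneg.mpr heig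
  have h2 := hpsd.dotProduct_mulVec_nonneg ξ
  have hstar : star ξ = ξ := by ext i; simp
  rw [hstar, hH_def, Matrix.sub_mulVec, dotProduct_sub,
    Matrix.smul_mulVec, Matrix.one_mulVec, dotProduct_smul] at h2
  simp only [smul_eq_mul] at h2
  linarith

lemma unobs_norm_sum_sq {V : Type*} [NormedAddCommGroup V] [InnerProductSpace ℝ V]
    {s : ℕ} {e : Fin s → V} (he : Orthonormal ℝ e) (ξ : Fin s → ℝ) :
    ‖∑ i, ξ i • e i‖ ^ 2 = ∑ i, ξ i ^ 2 := by
  rw [← real_inner_self_eq_norm_sq, he.inner_sum]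
  simp [sq]

lemma unobs_integral_quad {s : ℕ} {T : ℝ} (c : Fin s → Fin s → ℝ → ℝ)
    (hc : ∀ i j, Continuous (c i j)) (G : Matrix (Fin s) (Fin s) ℝ)
    (hG : ∀ i j, G i j = ∫ t in (0:ℝ)..T, c i j t) (ξ : Fin s → ℝ) :
    (∫ t in (0:ℝ)..T, ∑ i, ∑ j, ξ i * ξ j * c i j t)
      = dotProduct ξ (G.mulVec ξ) := by
  have hsum1 : (∫ t in (0:ℝ)..T, ∑ i, ∑ j, ξ i * ξ j * c i j t)
      = ∑ i, ∑ j, ∫ t in (0:ℝ)..T, ξ i * ξ j * c i j t := by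
    have h1 : ∀ t : ℝ, (∑ i, ∑ j, ξ i * ξ j * c i j t)
        = ∑ q : Fin s × Fin s, ξ q.1 * ξ q.2 * c q.1 q.2 t := by
      intro t
      rw [← Finset.sum_product']
      rfl
    simp only [h1]
    rw [← Finset.sum_product']
    show _ = ∑ q : Fin s × Fin s, ∫ t in (0:ℝ)..T, ξ q.1 * ξ q.2 * c q.1 q.2 t
    apply intervalIntegral.integral_finset_sum
    intro q _
    exact (continuous_const.mul (hc q.1 q.2)).intervalIntegrable _ _
  have hsum3 : ∀ i j : Fin s, (∫ t in (0:ℝ)..T, ξ i * ξ j * c i j t)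
      = ξ i * ξ j * G i j := by
    intro i j
    rw [intervalIntegral.integral_const_mul, hG i j]
  calc (∫ t in (0:ℝ)..T, ∑ i, ∑ j, ξ i * ξ j * c i j t)
      = ∑ i, ∑ j, ξ i * ξ j * G i j := by
        rw [hsum1]
        exact Finset.sum_congr rfl fun i _ => Finset.sum_congr rfl fun j _ => hsum3 i j
    _ = dotProduct ξ (G.mulVec ξ) := by
        simp only [dotProduct, Matrix.mulVec, Finset.mul_sum]
        exact Finset.sum_congr rfl fun i _ => Finset.sum_congr rfl fun j _ => by ring

end Aux

/-- Gramian characterization of the unobservability index for a linear ODE system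
`u' = -Au + g` on a finite-dimensional inner product space with orthonormal
`e₁,…,e_s` spanning the space for estimation `W`: `ε² = σ_min ρ²`, where `σ_min` is
the smallest eigenvalue of the Gramian `G_{ij} = ∫₀ᵀ ⟨Θ(e^{−At}eᵢ), Θ(e^{−At}eⱼ)⟩ dt`;
in particular if `σ_min > 0` then `ρ/ε = 1/√σ_min`. -/
theorem unobservability_index_gramian
    {V : Type*} [NormedAddCommGroup V] [InnerProductSpace ℝ V] [FiniteDimensional ℝ V]
    {T : ℝ} (hT : 0 < T)
    (A : V →L[ℝ] V) (g : ℝ → V) (hg : ContinuousOn g (Set.Icc 0 T))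
    {p : ℕ} (Θ : V →ₗ[ℝ] EuclideanSpace ℝ (Fin p))
    {s : ℕ} (e : Fin s → V) (he : Orthonormal ℝ e)
    -- the nominal solution `u` with `u 0 ∈ W`
    (u : ℝ → V) (hu : ContinuousOn u (Set.Icc 0 T))
    (hu' : ∀ t ∈ Set.Ioc 0 T, HasDerivAt u (g t - A (u t)) t)
    (hu0 : u 0 ∈ Submodule.span ℝ (Set.range e))
    (ρ : ℝ) (hρ : 0 < ρ)
    -- the unobservability quantity
    (ε : ℝ) (hε : ε = sInf {r | ∃ uhat : ℝ → V, ContinuousOn uhat (Set.Icc 0 T) ∧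
      (∀ t ∈ Set.Ioc 0 T, HasDerivAt uhat (g t - A (uhat t)) t) ∧
      uhat 0 ∈ Submodule.span ℝ (Set.range e) ∧ ‖uhat 0 - u 0‖ = ρ ∧
      r = Real.sqrt (∫ t in (0:ℝ)..T, ‖Θ (uhat t) - Θ (u t)‖ ^ 2)})
    -- the Gramian matrix and its smallest eigenvalue
    (G : Matrix (Fin s) (Fin s) ℝ)
    (hG : ∀ i j, G i j = ∫ t in (0:ℝ)..T,
      (inner ℝ (Θ ((NormedSpace.exp (-(t • A))) (e i)))
        (Θ ((NormedSpace.exp (-(t • A))) (e j))) : ℝ))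
    (σmin : ℝ)
    (hσ : IsLeast {σ : ℝ | ∃ ξ : Fin s → ℝ, ξ ≠ 0 ∧ G.mulVec ξ = σ • ξ} σmin) :
    ε ^ 2 = σmin * ρ ^ 2 ∧ (0 < σmin → ρ / ε = 1 / Real.sqrt σmin) := by
  -- continuity of the flow and derivative of flow
  have hexpd : ∀ (v : V) (t : ℝ),
      HasDerivAt (fun t : ℝ => NormedSpace.exp (-(t • A)) v)
        (-(A (NormedSpace.exp (-(t • A)) v))) t := by
    intro v t
    have h : ∀ r : ℝ, -(r • A) = r • (-A) := fun r => (smul_neg r A).symm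
    simp only [h]
    have := (hasDerivAt_exp_smul_const' (𝕂 := ℝ) (-A) t).clm_apply (hasDerivAt_const t v)
    simpa using this
  have hexpc : ∀ v : V, Continuous fun t : ℝ => NormedSpace.exp (-(t • A)) v := by
    intro v
    exact continuous_iff_continuousAt.2 fun t => (hexpd v t).continuousAt
  have hΘc : Continuous Θ := Θ.continuous_of_finiteDimensional
  -- the quadratic form identity
  have hQint : ∀ ξ : Fin s → ℝ,
      (∫ t in (0:ℝ)..T, ‖Θ (NormedSpace.exp (-(t • A)) (∑ i, ξ i • e i))‖ ^ 2)
        = dotProduct ξ (G.mulVec ξ) := by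
    intro ξ
    have hci : ∀ i j : Fin s, Continuous (fun t : ℝ =>
        (inner ℝ (Θ (NormedSpace.exp (-(t • A)) (e i)))
          (Θ (NormedSpace.exp (-(t • A)) (e j))) : ℝ)) :=
      fun i j => (hΘc.comp (hexpc (e i))).inner (hΘc.comp (hexpc (e j)))
    have hpt : ∀ t : ℝ, ‖Θ (NormedSpace.exp (-(t • A)) (∑ i, ξ i • e i))‖ ^ 2
        = ∑ i, ∑ j, ξ i * ξ j *
          (inner ℝ (Θ (NormedSpace.exp (-(t • A)) (e i)))
            (Θ (NormedSpace.exp (-(t • A)) (e j))) : ℝ) := by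
      intro t
      have h1 : Θ (NormedSpace.exp (-(t • A)) (∑ i, ξ i • e i))
          = ∑ i, ξ i • Θ (NormedSpace.exp (-(t • A)) (e i)) := by
        simp [map_sum, map_smul]
      rw [h1, ← real_inner_self_eq_norm_sq]
      rw [sum_inner]
      refine Finset.sum_congr rfl fun i _ => ?_
      rw [inner_sum]
      refine Finset.sum_congr rfl fun j _ => ?_
      rw [real_inner_smul_left, real_inner_smul_right]
      ring
    have hmain := unobs_integral_quad
      (fun i j t => (inner ℝ (Θ (NormedSpace.exp (-(t • A)) (e i)))
          (Θ (NormedSpace.exp (-(t • A)) (e j))) : ℝ)) hci G hG ξ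
    rw [← hmain]
    simp only [hpt]
  -- symmetry of G
  have hGh : G.IsHermitian := by
    refine Matrix.IsHermitian.ext fun i j => ?_
    simp only [RCLike.star_def, starRingEnd_apply, star_trivial]
    rw [hG i j, hG j i]
    simp_rw [real_inner_comm]
  -- eigenvector data
  obtain ⟨ξ0, hξ0ne, hξ0⟩ := hσ.1
  have hξ0dot : dotProduct ξ0 (G.mulVec ξ0) = σmin * ∑ i, ξ0 i ^ 2 := by
    rw [hξ0, dotProduct_smul]
    simp [dotProduct, Finset.mul_sum, sq]
  have hdotself : ∀ ξ : Fin s → ℝ, dotProduct ξ ξ = ∑ i, ξ i ^ 2 := by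
    intro ξ; simp [dotProduct, sq]
  have hξ0pos : 0 < ∑ i, ξ0 i ^ 2 := by
    obtain ⟨i0, hi0⟩ := Function.ne_iff.1 hξ0ne
    refine Finset.sum_pos' (fun i _ => sq_nonneg _) ⟨i0, Finset.mem_univ _, ?_⟩
    have : (0:ℝ) < |ξ0 i0| := abs_pos.2 hi0
    calc (0:ℝ) < |ξ0 i0| ^ 2 := pow_pos this 2
      _ = ξ0 i0 ^ 2 := sq_abs _
  -- σmin is nonnegative
  have hσ0 : 0 ≤ σmin := by
    have hint : 0 ≤ dotProduct ξ0 (G.mulVec ξ0) := by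
      rw [← hQint ξ0]
      exact intervalIntegral.integral_nonneg hT.le (fun t _ => sq_nonneg _)
    rw [hξ0dot] at hint
    nlinarith
  -- key : IsLeast of the admissible set
  have hleast : IsLeast {r | ∃ uhat : ℝ → V, ContinuousOn uhat (Set.Icc 0 T) ∧
      (∀ t ∈ Set.Ioc 0 T, HasDerivAt uhat (g t - A (uhat t)) t) ∧
      uhat 0 ∈ Submodule.span ℝ (Set.range e) ∧ ‖uhat 0 - u 0‖ = ρ ∧
      r = Real.sqrt (∫ t in (0:ℝ)..T, ‖Θ (uhat t) - Θ (u t)‖ ^ 2)}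
      (Real.sqrt (σmin * ρ ^ 2)) := by
    constructor
    · -- membership: perturb by the scaled eigenvector
      set n0 : ℝ := Real.sqrt (∑ i, ξ0 i ^ 2) with hn0_def
      have hn0 : 0 < n0 := Real.sqrt_pos.2 hξ0pos
      have hn0sq : n0 ^ 2 = ∑ i, ξ0 i ^ 2 := Real.sq_sqrt hξ0pos.le
      set ξ : Fin s → ℝ := fun i => (ρ / n0) * ξ0 i with hξ_def
      have hξsmul : ξ = (ρ / n0) • ξ0 := rfl
      have hsum : ∑ i, ξ i ^ 2 = ρ ^ 2 := by
        simp only [hξ_def, mul_pow, ← Finset.mul_sum, ← hn0sq]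
        field_simp
      have hQξ : dotProduct ξ (G.mulVec ξ) = σmin * ρ ^ 2 := by
        rw [hξsmul, Matrix.mulVec_smul, hξ0, smul_dotProduct, dotProduct_smul,
          dotProduct_smul, hdotself ξ0]
        simp only [smul_eq_mul]
        rw [← hn0sq]
        field_simp
      set v : V := ∑ i, ξ i • e i with hv_def
      have hvmem : v ∈ Submodule.span ℝ (Set.range e) :=
        Submodule.sum_mem _ fun i _ => Submodule.smul_mem _ _ (Submodule.subset_span ⟨i, rfl⟩)
      have hvnorm : ‖v‖ = ρ := by
        have := unobs_norm_sum_sq he ξ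
        rw [hsum] at this
        have h1 : ‖v‖ = Real.sqrt (‖v‖ ^ 2) := (Real.sqrt_sq (norm_nonneg _)).symm
        rw [h1, hv_def, this, Real.sqrt_sq hρ.le]
      refine ⟨fun t => u t + NormedSpace.exp (-(t • A)) v, ?_, ?_, ?_, ?_, ?_⟩
      · exact hu.add (hexpc v).continuousOn
      · intro t ht
        have h1 := (hu' t ht).add (hexpd v t)
        have h2 : g t - A (u t + NormedSpace.exp (-(t • A)) v)
            = g t - A (u t) + -(A (NormedSpace.exp (-(t • A)) v)) := by
          simp only [map_add]; abel
        rw [h2]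
        exact h1
      · have h0 : NormedSpace.exp (-((0:ℝ) • A)) v = v := by
          simp [NormedSpace.exp_zero]
        simp only [h0]
        exact Submodule.add_mem _ hu0 hvmem
      · have h0 : NormedSpace.exp (-((0:ℝ) • A)) v = v := by
          simp [NormedSpace.exp_zero]
        simp only [h0]
        simpa using hvnorm
      · have hintg : (∫ t in (0:ℝ)..T,
            ‖Θ (u t + NormedSpace.exp (-(t • A)) v) - Θ (u t)‖ ^ 2)
            = ∫ t in (0:ℝ)..T, ‖Θ (NormedSpace.exp (-(t • A)) v)‖ ^ 2 := by
          congr 1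
          funext t
          simp [map_add]
        rw [hintg, hv_def, hQint ξ, hQξ]
    · -- lower bound
      rintro r ⟨uhat, huc, huh', huh0, hnormρ, hr⟩
      have hw0 : uhat 0 - u 0 ∈ Submodule.span ℝ (Set.range e) :=
        Submodule.sub_mem _ huh0 hu0
      obtain ⟨ξ, hξ⟩ := (Submodule.mem_span_range_iff_exists_fun ℝ).1 hw0
      have hsum : ∑ i, ξ i ^ 2 = ρ ^ 2 := by
        have := unobs_norm_sum_sq he ξ
        rw [hξ, hnormρ] at this
        linarith
      have hrep := unobs_flow_rep hT A g u uhat hu hu' huc huh'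
      have hint : (∫ t in (0:ℝ)..T, ‖Θ (uhat t) - Θ (u t)‖ ^ 2)
          = dotProduct ξ (G.mulVec ξ) := by
        rw [← hQint ξ]
        apply intervalIntegral.integral_congr
        intro t ht
        rw [Set.uIcc_of_le hT.le] at ht
        simp only
        rw [hξ, ← hrep t ht, map_sub]
      have hlow : σmin * ρ ^ 2 ≤ dotProduct ξ (G.mulVec ξ) := by
        have := unobs_quad_lower G hGh hσ.2 ξ
        rw [hdotself ξ, hsum] at this
        exact this
      rw [hr, hint]
      exact Real.sqrt_le_sqrt hlow
  have hε' : ε = Real.sqrt (σmin * ρ ^ 2) := by rw [hε, hleast.csInf_eq]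
  constructor
  · rw [hε']
    exact Real.sq_sqrt (mul_nonneg hσ0 (sq_nonneg ρ))
  · intro hpos
    have hs : Real.sqrt (σmin * ρ ^ 2) = Real.sqrt σmin * ρ := by
      rw [Real.sqrt_mul hσ0, Real.sqrt_sq hρ.le]
    have hsq : (0:ℝ) < Real.sqrt σmin := Real.sqrt_pos.2 hpos
    rw [hε', hs]
    field_simp
end
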